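/- Let A and B be positive definite d×d real matrices with A ≤ B in the Loewner order, and let x ∈ ℝ^d. Then log det(A + x xᵀ) − log det(A) ≥ log det(B + x xᵀ) − log det(B). -/

import Mathlib

open Matrix

private lemma psd_cs {d : ℕ} {M : Matrix (Fin d) (Fin d) ℝ} (hM : M.PosSemidef)
    (u v : Fin d → ℝ) :
    (v ⬝ᵥ M *ᵥ u) ^ 2 ≤ (v ⬝ᵥ M *ᵥ v) * (u ⬝ᵥ M *ᵥ u) := by
  have hsym : ∀ a b : Fin d → ℝ, a ⬝ᵥ M *ᵥ b = b ⬝ᵥ M *ᵥ a := by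
    intro a b
    rw [dotProduct_mulVec, ← mulVec_transpose]
    have ht : Mᵀ = M := by
      have := hM.1
      rw [Matrix.IsHermitian, conjTranspose_eq_transpose_of_trivial] at this
      exact this
    rw [ht, dotProduct_comm]
  have key : ∀ t : ℝ,
      0 ≤ (u ⬝ᵥ M *ᵥ u) * (t * t) + (2 * (v ⬝ᵥ M *ᵥ u)) * t + (v ⬝ᵥ M *ᵥ v) := by
    intro t
    have h0 := hM.dotProduct_mulVec_nonneg (v + t • u)
    simp only [star_trivial] at h0
    have hexp : (v + t • u) ⬝ᵥ M *ᵥ (v + t • u)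
        = (u ⬝ᵥ M *ᵥ u) * (t * t) + (2 * (v ⬝ᵥ M *ᵥ u)) * t + (v ⬝ᵥ M *ᵥ v) := by
      rw [mulVec_add, dotProduct_add, add_dotProduct, add_dotProduct,
        mulVec_smul, dotProduct_smul, smul_dotProduct, smul_dotProduct,
        dotProduct_smul, hsym u v]
      ring_nf
    linarith [hexp ▸ h0]
  have hd : discrim (u ⬝ᵥ M *ᵥ u) (2 * (v ⬝ᵥ M *ᵥ u)) (v ⬝ᵥ M *ᵥ v) ≤ 0 :=
    discrim_le_zero key
  rw [discrim] at hd
  nlinarith [hd]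

private lemma inv_quad_le {d : ℕ} {A B : Matrix (Fin d) (Fin d) ℝ}
    (hA : A.PosDef) (hB : B.PosDef) (hAB : (B - A).PosSemidef) (x : Fin d → ℝ) :
    x ⬝ᵥ B⁻¹ *ᵥ x ≤ x ⬝ᵥ A⁻¹ *ᵥ x := by
  set u := A⁻¹ *ᵥ x with hu
  set v := B⁻¹ *ᵥ x with hv
  have hAu : A *ᵥ u = x := by
    rw [hu, mulVec_mulVec, Matrix.mul_nonsing_inv _ (isUnit_iff_ne_zero.mpr hA.det_pos.ne'), one_mulVec]
  have hBv : B *ᵥ v = x := by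
    rw [hv, mulVec_mulVec, Matrix.mul_nonsing_inv _ (isUnit_iff_ne_zero.mpr hB.det_pos.ne'), one_mulVec]
  have hp : x ⬝ᵥ u = u ⬝ᵥ A *ᵥ u := by rw [hAu, dotProduct_comm]
  have hq : x ⬝ᵥ v = v ⬝ᵥ B *ᵥ v := by rw [hBv, dotProduct_comm]
  have hq0 : 0 ≤ x ⬝ᵥ v := by
    have := hB.posSemidef.inv.dotProduct_mulVec_nonneg x
    simpa using this
  have hp0 : 0 ≤ x ⬝ᵥ u := by
    have := hA.posSemidef.inv.dotProduct_mulVec_nonneg x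
    simpa using this
  have hvAv : v ⬝ᵥ A *ᵥ v ≤ x ⬝ᵥ v := by
    have h := hAB.dotProduct_mulVec_nonneg v
    simp only [star_trivial, sub_mulVec, dotProduct_sub] at h
    rw [hq]
    linarith
  have hcs := psd_cs hA.posSemidef u v
  have hvAu : v ⬝ᵥ A *ᵥ u = x ⬝ᵥ v := by rw [hAu, dotProduct_comm]
  rw [hvAu, ← hp] at hcs
  -- hcs : (x ⬝ᵥ v)^2 ≤ (v ⬝ᵥ A *ᵥ v) * (x ⬝ᵥ u)
  rcases eq_or_lt_of_le hq0 with h0 | h0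
  · rw [← h0]; exact hp0
  · nlinarith [hvAv, hcs, hp0, h0]

private lemma logdet_diff {d : ℕ} {M : Matrix (Fin d) (Fin d) ℝ} (hM : M.PosDef)
    (x : Fin d → ℝ) :
    Real.log (M + vecMulVec x x).det - Real.log M.det
      = Real.log (1 + x ⬝ᵥ M⁻¹ *ᵥ x) := by
  have hdet : (M + vecMulVec x x).det = M.det * (1 + x ⬝ᵥ M⁻¹ *ᵥ x) := by
    have h1 : M + vecMulVec x x
        = M * (1 + replicateCol (Fin 1) (M⁻¹ *ᵥ x) * replicateRow (Fin 1) x) := by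
      rw [Matrix.mul_add, mul_one, ← Matrix.mul_assoc, ← replicateCol_mulVec,
        mulVec_mulVec, Matrix.mul_nonsing_inv _ (isUnit_iff_ne_zero.mpr hM.det_pos.ne'),
        one_mulVec, vecMulVec_eq (Fin 1)]
      rfl
    rw [h1, det_mul]
    exact congrArg _ (det_one_add_replicateCol_mul_replicateRow (M⁻¹ *ᵥ x) x)
  have hq0 : 0 ≤ x ⬝ᵥ M⁻¹ *ᵥ x := by
    have := hM.posSemidef.inv.dotProduct_mulVec_nonneg x
    simpa using this
  rw [hdet, Real.log_mul (ne_of_gt hM.det_pos) (by linarith)]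
  ring

theorem logdet_gain_antitone {d : ℕ} (A B : Matrix (Fin d) (Fin d) ℝ)
    (hA : A.PosDef) (hB : B.PosDef) (hAB : (B - A).PosSemidef) (x : Fin d → ℝ) :
    Real.log (A + vecMulVec x x).det - Real.log A.det ≥
      Real.log (B + vecMulVec x x).det - Real.log B.det := by
  rw [logdet_diff hA x, logdet_diff hB x]
  have hq0 : 0 ≤ x ⬝ᵥ B⁻¹ *ᵥ x := by
    have := hB.posSemidef.inv.dotProduct_mulVec_nonneg x
    simpa using this
  exact Real.log_le_log (by linarith) (by linarith [inv_quad_le hA hB hAB x])
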